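/- Let Ω be a nonempty finite set, let 0 < p ≤ 1 be real, let F be a finite family of subsets of Ω each of cardinality at least p·|Ω|, and let m be a positive integer with |F|·(1 − p)^m < 1. Then there exists a subset S ⊆ Ω with |S| ≤ m such that S intersects every member of F. -/

import Mathlib

/-- Probabilistic existence of small hitting sets: if every member of the finite family `F` of
subsets of a nonempty finite set `Ω` has cardinality at least `p * |Ω|` and
`|F| * (1 - p)^m < 1`, then there is a hitting set for `F` of size at most `m`. -/
theorem exists_small_hitting_set (Ω : Type*) [Fintype Ω] [Nonempty Ω]
    (p : ℝ) (hp0 : 0 < p) (hp1 : p ≤ 1)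
    (F : Finset (Finset Ω))
    (hF : ∀ f ∈ F, p * (Fintype.card Ω : ℝ) ≤ (f.card : ℝ))
    (m : ℕ) (hm : 0 < m)
    (hbound : (F.card : ℝ) * (1 - p) ^ m < 1) :
    ∃ S : Finset Ω, S.card ≤ m ∧ ∀ f ∈ F, ∃ x ∈ S, x ∈ f := by
  classical
  set n := Fintype.card Ω with hn
  have hn0 : 0 < n := Fintype.card_pos
  -- bad tuples: those that miss some f ∈ F
  set bad : Finset (Fin m → Ω) :=
    F.biUnion (fun f => Fintype.piFinset (fun _ : Fin m => fᶜ)) with hbad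
  have hcard_pi : ∀ f : Finset Ω,
      (Fintype.piFinset (fun _ : Fin m => fᶜ)).card = fᶜ.card ^ m := by
    intro f
    rw [Fintype.card_piFinset]
    simp
  have hbadcard : (bad.card : ℝ) < (n : ℝ) ^ m := by
    have h1 : bad.card ≤ ∑ f ∈ F, fᶜ.card ^ m := by
      calc bad.card ≤ ∑ f ∈ F, (Fintype.piFinset (fun _ : Fin m => fᶜ)).card :=
            Finset.card_biUnion_le
        _ = ∑ f ∈ F, fᶜ.card ^ m := by simp [hcard_pi]
    have h2 : ∀ f ∈ F, ((fᶜ.card : ℝ)) ^ m ≤ ((1 - p) * n) ^ m := by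
      intro f hf
      apply pow_le_pow_left₀ (by positivity)
      have := hF f hf
      have hcc : (fᶜ.card : ℝ) = n - f.card := by
        rw [Finset.card_compl]
        have hle : f.card ≤ n := Finset.card_le_univ f |>.trans_eq (by simp [hn])
        rw [← hn]
        push_cast [Nat.cast_sub hle]
        ring
      rw [hcc]
      nlinarith
    calc (bad.card : ℝ) ≤ ∑ f ∈ F, ((fᶜ.card : ℝ)) ^ m := by
          exact_mod_cast Nat.cast_le.mpr h1 |>.trans_eq (by push_cast; ring)
      _ ≤ ∑ _f ∈ F, ((1 - p) * n) ^ m := Finset.sum_le_sum h2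
      _ = (F.card : ℝ) * ((1 - p) ^ m * (n : ℝ) ^ m) := by
          rw [Finset.sum_const, nsmul_eq_mul, mul_pow]
      _ = ((F.card : ℝ) * (1 - p) ^ m) * (n : ℝ) ^ m := by ring
      _ < 1 * (n : ℝ) ^ m := by
          apply mul_lt_mul_of_pos_right hbound (by positivity)
      _ = (n : ℝ) ^ m := one_mul _
  -- so bad ≠ univ: there is a good tuple
  have hne : bad ≠ Finset.univ := by
    intro h
    rw [h] at hbadcard
    have : (Finset.univ : Finset (Fin m → Ω)).card = n ^ m := by
      simp [hn, Fintype.card_fun]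
    rw [this] at hbadcard
    push_cast at hbadcard
    exact lt_irrefl _ hbadcard
  obtain ⟨g, hg⟩ : ∃ g : Fin m → Ω, g ∉ bad := by
    by_contra h
    push_neg at h
    exact hne (Finset.eq_univ_iff_forall.mpr h)
  refine ⟨Finset.image g Finset.univ, ?_, ?_⟩
  · calc (Finset.image g Finset.univ).card ≤ (Finset.univ : Finset (Fin m)).card :=
        Finset.card_image_le
      _ = m := by simp
  · intro f hf
    simp only [hbad, Finset.mem_biUnion, Fintype.mem_piFinset, Finset.mem_compl] at hg
    push_neg at hg
    obtain ⟨i, hi⟩ := hg f hf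
    exact ⟨g i, Finset.mem_image_of_mem g (Finset.mem_univ i), hi⟩
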